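/- Define f_n(y) = Σ_{j=0}^{n} (1/n)·C(n,j)·C(2j,j)·y^j for n ≥ 1, and F(x,y) = Σ_{n≥1} f_n(y)·x^n. Then for real x, y with 0 < x < 1, y ≥ 0, and 4xy/(1−x) ≤ 1, one has F(x,y) = ln 4 − 2·ln(√(1−x) + √(1 − x − 4xy)). -/

import Mathlib

open Real

lemma deriv_helper {a : ℕ → ℝ} (ha : ∀ j, |a j| ≤ 4 ^ j) {t : ℝ} (ht : |t| < 4⁻¹) :
    HasDerivAt (fun s : ℝ => ∑' j, a j * s ^ j) (∑' j, a j * ((j : ℝ) * t ^ (j - 1))) t := by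
  set r : ℝ := (|t| + 4⁻¹) / 2 with hr
  have h0t : (0:ℝ) ≤ |t| := abs_nonneg t
  have hr0 : 0 < r := by positivity
  have hrt : |t| < r := by simp only [hr]; linarith
  have hr4 : r < 4⁻¹ := by simp only [hr]; linarith
  have h4r : ‖4 * r‖ < 1 := by
    rw [Real.norm_eq_abs, abs_of_pos (by positivity)]; linarith
  have hu : Summable (fun j : ℕ => r⁻¹ * ((j : ℝ) ^ 1 * (4 * r) ^ j)) :=
    (summable_pow_mul_geometric_of_norm_lt_one 1 h4r).mul_left _
  apply hasDerivAt_tsum_of_isPreconnected hu (Metric.isOpen_ball (x := (0:ℝ)) (ε := r))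
    ((convex_ball (0:ℝ) r).isPreconnected)
    (fun j y _ => (hasDerivAt_pow j y).const_mul (a j))
    ?_ (Metric.mem_ball_self hr0) ?_ (by simpa [Real.dist_eq] using hrt)
  · intro j s hs
    have hs' : |s| < r := by simpa [Real.dist_eq] using hs
    have h1 : ‖a j * ((j:ℝ) * s ^ (j - 1))‖ ≤ 4 ^ j * ((j:ℝ) * r ^ (j - 1)) := by
      rw [norm_mul, norm_mul, norm_pow, Real.norm_eq_abs, Real.norm_eq_abs, Real.norm_eq_abs,
        Nat.abs_cast]
      have h2 : |s| ^ (j - 1) ≤ r ^ (j - 1) := pow_le_pow_left₀ (abs_nonneg s) hs'.le _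
      have h3 : (0:ℝ) ≤ (j:ℝ) := Nat.cast_nonneg j
      have := ha j
      exact mul_le_mul (ha j) (mul_le_mul_of_nonneg_left h2 h3)
        (by positivity) (by positivity)
    refine h1.trans (le_of_eq ?_)
    rcases Nat.eq_zero_or_pos j with hj | hj
    · subst hj; simp
    · have : r ^ (j - 1) = (r ^ j) / r := by
        rw [eq_div_iff hr0.ne', ← pow_succ, Nat.sub_add_cancel hj]
      rw [this, mul_pow]
      field_simp
  · apply summable_of_ne_finset_zero (s := ({0} : Finset ℕ))
    intro j hj
    simp only [Finset.mem_singleton] at hj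
    simp [zero_pow hj]

lemma cb_bound : ∀ j : ℕ, |(((2*j).choose j : ℕ) : ℝ)| ≤ 4 ^ j := by
  intro j
  rw [abs_of_nonneg (Nat.cast_nonneg _)]
  have h : ((2*j).choose j) ≤ 2 ^ (2*j) := by
    calc (2*j).choose j ≤ ∑ k ∈ Finset.range (2*j+1), (2*j).choose k :=
          Finset.single_le_sum (fun k _ => Nat.zero_le _) (by simp [Nat.lt_succ_iff]; omega)
      _ = 2 ^ (2*j) := Nat.sum_range_choose (2*j)
  calc (((2*j).choose j : ℕ) : ℝ) ≤ ((2:ℝ) ^ (2*j)) := by exact_mod_cast h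
    _ = 4 ^ j := by rw [pow_mul]; norm_num

lemma summable_aux4 {a : ℕ → ℝ} (ha : ∀ j, |a j| ≤ 4 ^ j) {s : ℝ} (hs : |s| < 4⁻¹) :
    Summable (fun j => a j * s ^ j) := by
  have hc : 4 * |s| < 1 := by linarith [hs]
  apply Summable.of_norm_bounded (g := fun j => (4 * |s|) ^ j)
    (summable_geometric_of_lt_one (by positivity) hc)
  intro j
  rw [norm_mul, norm_pow, Real.norm_eq_abs, Real.norm_eq_abs, mul_pow]
  exact mul_le_mul_of_nonneg_right (ha j) (by positivity)

lemma summable_deriv4 {a : ℕ → ℝ} (ha : ∀ j, |a j| ≤ 4 ^ j) {s : ℝ} (hs : |s| < 4⁻¹) :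
    Summable (fun j => a j * ((j : ℝ) * s ^ (j - 1))) := by
  rw [← summable_nat_add_iff 1]
  have hc : ‖4 * |s|‖ < 1 := by
    rw [Real.norm_eq_abs, abs_of_nonneg (by positivity)]; linarith [hs]
  have S1 : Summable (fun n : ℕ => 4 * ((n:ℝ) * (4*|s|)^n) + 4 * ((4*|s|)^n)) := by
    have := (summable_pow_mul_geometric_of_norm_lt_one 1 hc).mul_left (4:ℝ)
    simp only [pow_one] at this
    exact this.add ((summable_geometric_of_lt_one (by positivity) (by
      rw [Real.norm_eq_abs, abs_of_nonneg (by positivity)] at hc; exact hc)).mul_left 4)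
  apply Summable.of_norm_bounded S1
  intro n
  simp only [Nat.add_sub_cancel]
  rw [norm_mul, norm_mul, Real.norm_eq_abs, Real.norm_eq_abs, Real.norm_eq_abs, Nat.abs_cast,
    abs_pow]
  have h1 : |a (n+1)| * ((↑(n+1):ℝ) * |s|^n) ≤ 4^(n+1) * ((↑(n+1):ℝ) * |s|^n) :=
    mul_le_mul_of_nonneg_right (ha _) (by positivity)
  refine h1.trans (le_of_eq ?_)
  push_cast
  rw [mul_pow]
  ring

lemma centralBinom_hasSum {t : ℝ} (ht0 : 0 ≤ t) (ht : t < 4⁻¹) :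
    HasSum (fun j : ℕ => (((2*j).choose j : ℕ) : ℝ) * t ^ j) (1 / Real.sqrt (1 - 4*t)) := by
  set cb : ℕ → ℝ := fun j => (((2*j).choose j : ℕ) : ℝ) with hcb
  set p : ℝ → ℝ := fun s => ∑' j, cb j * s ^ j with hp
  have key : ∀ s : ℝ, 0 ≤ s → s < 4⁻¹ →
      HasDerivAt (fun u => p u * Real.sqrt (1 - 4*u)) 0 s := by
    intro s hs0 hs4
    have hsabs : |s| < 4⁻¹ := by rw [abs_of_nonneg hs0]; exact hs4
    have h14 : 0 < 1 - 4*s := by linarith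
    have hsq : 0 < Real.sqrt (1 - 4*s) := Real.sqrt_pos.mpr h14
    have W : Summable (fun j => cb j * ((j : ℝ) * s ^ (j - 1))) := summable_deriv4 cb_bound hsabs
    have P : Summable (fun j => cb j * s ^ j) := summable_aux4 cb_bound hsabs
    set q : ℝ := ∑' j, cb j * ((j : ℝ) * s ^ (j - 1)) with hq
    set v : ℕ → ℝ := fun j => cb j * ((j : ℝ) * s ^ (j - 1)) with hv
    -- telescoping identity
    have tele : (fun j => v j * (1 - 4*s) - 2 * (cb j * s ^ j))
        = (fun j => v j - v (j+1)) := by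
      funext j
      cases j with
      | zero =>
        have hcb1 : cb 1 = 2 := by norm_num [hcb]
        simp [hv, hcb, hcb1]
      | succ m =>
        have hrec := Nat.succ_mul_centralBinom_succ (m+1)
        rw [Nat.centralBinom_eq_two_mul_choose, Nat.centralBinom_eq_two_mul_choose] at hrec
        have hrecR : ((m:ℝ)+2) * cb (m+2) = 2*(2*((m:ℝ)+1)+1) * cb (m+1) := by
          have := congrArg (fun n : ℕ => (n : ℝ)) hrec
          push_cast at this
          push_cast [hcb]
          linarith [this]
        simp only [hv]
        have e1 : (m+1) - 1 = m := by omega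
        have e2 : (m+2) - 1 = m+1 := by omega
        rw [e1, e2, pow_succ]
        push_cast
        linear_combination (s^m * s) * hrecR
    have D : HasSum (fun j => v j * (1 - 4*s) - 2 * (cb j * s ^ j)) (q * (1-4*s) - 2 * p s) :=
      (W.hasSum.mul_right _).sub (P.hasSum.mul_left 2)
    rw [tele] at D
    have hlim1 : Filter.Tendsto (fun N => ∑ j ∈ Finset.range N, (v j - v (j+1)))
        Filter.atTop (nhds (q * (1-4*s) - 2 * p s)) := D.tendsto_sum_nat
    have hlim2 : Filter.Tendsto (fun N => ∑ j ∈ Finset.range N, (v j - v (j+1)))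
        Filter.atTop (nhds 0) := by
      have hv0 : v 0 = 0 := by simp [hv]
      have : (fun N => ∑ j ∈ Finset.range N, (v j - v (j+1))) = fun N => v 0 - v N := by
        funext N; exact Finset.sum_range_sub' v N
      rw [this, hv0]
      simpa using (Filter.Tendsto.const_sub 0 W.tendsto_atTop_zero)
    have hkey : q * (1-4*s) - 2 * p s = 0 := tendsto_nhds_unique hlim1 hlim2
    -- derivative of p
    have hp' : HasDerivAt p q s := by
      have := deriv_helper cb_bound hsabs
      exact this
    -- derivative of sqrt(1-4s)
    have hinner : HasDerivAt (fun u : ℝ => 1 - 4*u) (-4) s := by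
      simpa using ((hasDerivAt_id s).const_mul (4:ℝ)).const_sub 1
    have hsqrt : HasDerivAt (fun u => Real.sqrt (1 - 4*u)) (-4 / (2 * Real.sqrt (1-4*s))) s :=
      hinner.sqrt h14.ne'
    have := hp'.mul hsqrt
    have hss : Real.sqrt (1-4*s) * Real.sqrt (1-4*s) = 1-4*s := Real.mul_self_sqrt h14.le
    have h2 : p s * (-4/(2*Real.sqrt (1-4*s))) = -2 * p s / Real.sqrt (1-4*s) := by ring
    have h3 : q * Real.sqrt (1-4*s) = q * (1-4*s) / Real.sqrt (1-4*s) := by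
      rw [eq_div_iff hsq.ne', mul_assoc, hss]
    have hval : q * Real.sqrt (1-4*s) + p s * (-4/(2*Real.sqrt (1-4*s))) = 0 := by
      rw [h2, h3, ← add_div, div_eq_zero_iff]
      left; linarith [hkey]
    exact this.congr_deriv hval
  -- now apply uniqueness on [0, t]
  have h14t : 0 < 1 - 4*t := by linarith
  have hsqt : 0 < Real.sqrt (1 - 4*t) := Real.sqrt_pos.mpr h14t
  have heq : ∀ u ∈ Set.Icc (0:ℝ) t, p u * Real.sqrt (1 - 4*u) = 1 := by
    have := eq_of_has_deriv_right_eq (f := fun u => p u * Real.sqrt (1 - 4*u))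
      (g := fun _ => 1) (f' := fun _ => 0) (a := 0) (b := t)
      (fun s hs => ((key s hs.1 (hs.2.trans ht)).hasDerivWithinAt))
      (fun s _ => (hasDerivAt_const s (1:ℝ)).hasDerivWithinAt)
      (fun s hs => ((key s hs.1 (lt_of_le_of_lt hs.2 ht)).continuousAt).continuousWithinAt)
      continuousOn_const ?_
    · exact this
    · have hp0 : p 0 = 1 := by
        show (∑' j, cb j * (0:ℝ) ^ j) = 1
        rw [tsum_eq_single 0 (fun j hj => by simp [zero_pow hj])]
        simp [hcb]
      simp [hp0]
  have hpt : p t = 1 / Real.sqrt (1 - 4*t) := by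
    have := heq t ⟨ht0, le_refl t⟩
    field_simp at this ⊢
    linarith [this]
  have P : Summable (fun j => cb j * t ^ j) :=
    summable_aux4 cb_bound (by rw [abs_of_nonneg ht0]; exact ht)
  rw [← hpt]
  exact P.hasSum

noncomputable def aCoef : ℕ → ℝ := fun j => if j = 0 then 0 else (((2*j).choose j : ℕ) : ℝ) / j

lemma aCoef_bound : ∀ j : ℕ, |aCoef j| ≤ 4 ^ j := by
  intro j
  cases j with
  | zero => simp [aCoef]
  | succ m =>
    simp only [aCoef, if_neg (Nat.succ_ne_zero m)]
    rw [abs_of_nonneg (by positivity)]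
    have h1 : (((2*(m+1)).choose (m+1) : ℕ) : ℝ) / (↑(m+1)) ≤ (((2*(m+1)).choose (m+1) : ℕ) : ℝ) := by
      apply div_le_self (Nat.cast_nonneg _)
      exact_mod_cast Nat.succ_le_succ (Nat.zero_le m)
    exact h1.trans ((le_abs_self _).trans (cb_bound (m+1)))

lemma logderiv_hasSum {s : ℝ} (hs0 : 0 ≤ s) (hs : s < 4⁻¹) :
    HasSum (fun j => aCoef j * ((j : ℝ) * s ^ (j - 1)))
      (4 / (Real.sqrt (1 - 4*s) * (1 + Real.sqrt (1 - 4*s)))) := by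
  have h14 : 0 < 1 - 4*s := by linarith
  have hsq : 0 < Real.sqrt (1 - 4*s) := Real.sqrt_pos.mpr h14
  have hss : Real.sqrt (1-4*s) * Real.sqrt (1-4*s) = 1-4*s := Real.mul_self_sqrt h14.le
  rcases eq_or_lt_of_le hs0 with hz | hpos
  · -- s = 0
    have h0 : ∀ j : ℕ, j ≠ 1 → aCoef j * ((j : ℝ) * s ^ (j - 1)) = 0 := by
      intro j hj
      cases j with
      | zero => simp
      | succ m =>
        have hm : m ≠ 0 := by omega
        rw [← hz]
        simp [Nat.add_sub_cancel, zero_pow hm]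
    have := hasSum_single (f := fun j => aCoef j * ((j : ℝ) * s ^ (j - 1))) 1 h0
    convert this using 1
    rw [← hz]
    norm_num [aCoef]
  · have hsne : s ≠ 0 := hpos.ne'
    have H := centralBinom_hasSum hs0 hs
    have H1 : HasSum (fun j => (((2*(j+1)).choose (j+1) : ℕ) : ℝ) * s ^ (j+1))
        (1 / Real.sqrt (1 - 4*s) - 1) := by
      apply (hasSum_nat_add_iff (f := fun j => (((2*j).choose j : ℕ) : ℝ) * s ^ j) 1).mpr
      convert H using 1
      · rfl
      simp
    have H2 : HasSum (fun j => (((2*(j+1)).choose (j+1) : ℕ) : ℝ) * s ^ j)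
        ((1 / Real.sqrt (1 - 4*s) - 1) / s) := by
      have h := H1.div_const s
      convert h using 2 with j
      · rfl
      rw [pow_succ]
      field_simp
    have hval : (1 / Real.sqrt (1 - 4*s) - 1) / s
        = 4 / (Real.sqrt (1 - 4*s) * (1 + Real.sqrt (1 - 4*s))) := by
      rw [div_eq_div_iff (by positivity) (by positivity)]
      field_simp
      nlinarith [hss, hsq]
    rw [hval] at H2
    have H3 : HasSum (fun n => aCoef (n+1) * (((n:ℝ)+1) * s ^ n))
        (4 / (Real.sqrt (1 - 4*s) * (1 + Real.sqrt (1 - 4*s)))) := by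
      convert H2 using 2 with n
      simp only [aCoef, if_neg (Nat.succ_ne_zero n)]
      have : ((n:ℝ)+1) ≠ 0 := by positivity
      push_cast
      field_simp
    have H5 : HasSum (fun n => aCoef (n+1) * ((↑(n+1):ℝ) * s ^ (n+1-1)))
        (4 / (Real.sqrt (1 - 4*s) * (1 + Real.sqrt (1 - 4*s)))) := by
      convert H3 using 2 with n
      push_cast
      norm_num
    have H4 := (hasSum_nat_add_iff (f := fun j => aCoef j * ((j : ℝ) * s ^ (j - 1))) 1).mp H5
    simpa [aCoef] using H4

lemma aCoef_nonneg (j : ℕ) : 0 ≤ aCoef j := by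
  unfold aCoef
  split
  · exact le_refl 0
  · positivity

lemma logSeries_interior {t : ℝ} (ht0 : 0 ≤ t) (ht : t < 4⁻¹) :
    HasSum (fun m : ℕ => aCoef (m+1) * t ^ (m+1))
      (2 * Real.log 2 - 2 * Real.log (1 + Real.sqrt (1 - 4*t))) := by
  set g : ℝ → ℝ := fun u => 2*Real.log 2 - 2*Real.log (1 + Real.sqrt (1 - 4*u)) with hg
  set h : ℝ → ℝ := fun u => ∑' j, aCoef j * u^j with hh
  set D : ℝ → ℝ := fun s => 4 / (Real.sqrt (1 - 4*s) * (1 + Real.sqrt (1 - 4*s))) with hD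
  have keyh : ∀ s : ℝ, 0 ≤ s → s < 4⁻¹ → HasDerivAt h (D s) s := by
    intro s hs0 hs4
    have hsabs : |s| < 4⁻¹ := by rw [abs_of_nonneg hs0]; exact hs4
    have hd := deriv_helper aCoef_bound hsabs
    rwa [(logderiv_hasSum hs0 hs4).tsum_eq] at hd
  have keyg : ∀ s : ℝ, 0 ≤ s → s < 4⁻¹ → HasDerivAt g (D s) s := by
    intro s hs0 hs4
    have h14 : 0 < 1 - 4*s := by linarith
    have hsq : 0 < Real.sqrt (1 - 4*s) := Real.sqrt_pos.mpr h14
    have h1sq : 0 < 1 + Real.sqrt (1 - 4*s) := by linarith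
    have hinner : HasDerivAt (fun u : ℝ => 1 - 4*u) (-4) s := by
      simpa using ((hasDerivAt_id s).const_mul (4:ℝ)).const_sub 1
    have hsqrt : HasDerivAt (fun u => Real.sqrt (1 - 4*u)) (-4 / (2 * Real.sqrt (1-4*s))) s :=
      hinner.sqrt h14.ne'
    have h1s : HasDerivAt (fun u => 1 + Real.sqrt (1 - 4*u)) (-4 / (2 * Real.sqrt (1-4*s))) s :=
      hsqrt.const_add 1
    have hlog : HasDerivAt (fun u => Real.log (1 + Real.sqrt (1 - 4*u)))
        ((-4 / (2 * Real.sqrt (1-4*s))) / (1 + Real.sqrt (1-4*s))) s := h1s.log h1sq.ne'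
    have := (hlog.const_mul (2:ℝ)).const_sub (2*Real.log 2)
    refine this.congr_deriv ?_
    rw [hD]
    field_simp
  have heq : ∀ u ∈ Set.Icc (0:ℝ) t, h u = g u := by
    apply eq_of_has_deriv_right_eq (f' := D)
      (fun s hs => (keyh s hs.1 (hs.2.trans ht)).hasDerivWithinAt)
      (fun s hs => (keyg s hs.1 (hs.2.trans ht)).hasDerivWithinAt)
      (fun s hs => ((keyh s hs.1 (lt_of_le_of_lt hs.2 ht)).continuousAt).continuousWithinAt)
      (fun s hs => ((keyg s hs.1 (lt_of_le_of_lt hs.2 ht)).continuousAt).continuousWithinAt)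
    -- h 0 = g 0
    have h0 : h 0 = 0 := by
      show (∑' j, aCoef j * (0:ℝ)^j) = 0
      rw [tsum_eq_single 0 (fun j hj => by simp [zero_pow hj])]
      simp [aCoef]
    have g0 : g 0 = 0 := by
      show 2*Real.log 2 - 2*Real.log (1 + Real.sqrt (1 - 4*0)) = 0
      norm_num
    rw [h0, g0]
  have htabs : |t| < 4⁻¹ := by rw [abs_of_nonneg ht0]; exact ht
  have S : Summable (fun j => aCoef j * t^j) := summable_aux4 aCoef_bound htabs
  have hS : HasSum (fun j => aCoef j * t^j) (g t) := by
    have := S.hasSum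
    rwa [show (∑' j, aCoef j * t^j) = h t from rfl, heq t ⟨ht0, le_refl t⟩] at this
  have hS2 : HasSum (fun j => aCoef j * t ^ j)
      (2*Real.log 2 - 2*Real.log (1 + Real.sqrt (1 - 4*t))) := hS
  apply (hasSum_nat_add_iff (f := fun j => aCoef j * t^j) 1).mpr
  simpa [Finset.sum_range_one, aCoef] using hS2

lemma logSeries_boundary :
    HasSum (fun m : ℕ => aCoef (m+1) * (4⁻¹:ℝ) ^ (m+1)) (2 * Real.log 2) := by
  set b : ℕ → ℝ := fun m => aCoef (m+1) * (4⁻¹:ℝ) ^ (m+1) with hb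
  have hbnn : ∀ m, 0 ≤ b m := fun m => mul_nonneg (aCoef_nonneg _) (by positivity)
  -- approximating sequence
  set tk : ℕ → ℝ := fun k => 4⁻¹ - 4⁻¹ * (1/(k+1)) with htk
  have htk0 : ∀ k, 0 ≤ tk k := by
    intro k
    have h1 : (1:ℝ)/(k+1) ≤ 1 := by
      rw [div_le_one (by positivity)]; linarith [Nat.cast_nonneg (α := ℝ) k]
    simp only [htk]
    nlinarith
  have htk4 : ∀ k, tk k < 4⁻¹ := by
    intro k
    have h1 : (0:ℝ) < 1/(k+1) := by positivity
    simp only [htk]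
    nlinarith
  have htklim : Filter.Tendsto tk Filter.atTop (nhds 4⁻¹) := by
    rw [htk]
    have h2 : Filter.Tendsto (fun k : ℕ => 4⁻¹ * (1/((k:ℝ)+1))) Filter.atTop (nhds (4⁻¹ * 0)) :=
      tendsto_one_div_add_atTop_nhds_zero_nat.const_mul 4⁻¹
    simpa using (tendsto_const_nhds (x := (4⁻¹:ℝ))).sub h2
  have glog : ∀ k, 2 * Real.log 2 - 2 * Real.log (1 + Real.sqrt (1 - 4 * tk k))
      ≤ 2 * Real.log 2 := by
    intro k
    have : 0 ≤ Real.log (1 + Real.sqrt (1 - 4 * tk k)) :=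
      Real.log_nonneg (by nlinarith [Real.sqrt_nonneg (1 - 4 * tk k)])
    linarith
  -- partial sums bounded
  have hpartial : ∀ N, ∑ m ∈ Finset.range N, b m ≤ 2 * Real.log 2 := by
    intro N
    have hFcont : Continuous (fun t : ℝ => ∑ m ∈ Finset.range N, aCoef (m+1) * t ^ (m+1)) :=
      continuous_finset_sum _ (fun m _ => continuous_const.mul (continuous_pow (m+1)))
    have hcont : Filter.Tendsto (fun k => ∑ m ∈ Finset.range N, aCoef (m+1) * (tk k) ^ (m+1))
        Filter.atTop (nhds (∑ m ∈ Finset.range N, aCoef (m+1) * (4⁻¹:ℝ) ^ (m+1))) := by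
      have := (hFcont.tendsto 4⁻¹).comp htklim
      simpa [Function.comp_def] using this
    refine le_of_tendsto hcont (Filter.Eventually.of_forall fun k => ?_)
    calc ∑ m ∈ Finset.range N, aCoef (m+1) * (tk k) ^ (m+1)
        ≤ 2 * Real.log 2 - 2 * Real.log (1 + Real.sqrt (1 - 4 * tk k)) :=
          sum_le_hasSum _ (fun m _ => mul_nonneg (aCoef_nonneg _) (pow_nonneg (htk0 k) _))
            (logSeries_interior (htk0 k) (htk4 k))
      _ ≤ 2 * Real.log 2 := glog k
  have hsummable : Summable b := summable_of_sum_range_le hbnn hpartial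
  have hL1 : ∑' m, b m ≤ 2 * Real.log 2 := Real.tsum_le_of_sum_range_le hbnn hpartial
  -- lower bound
  have hglim : Filter.Tendsto (fun k => 2 * Real.log 2 - 2 * Real.log (1 + Real.sqrt (1 - 4 * tk k)))
      Filter.atTop (nhds (2 * Real.log 2)) := by
    have hc1 : Continuous (fun t : ℝ => 1 + Real.sqrt (1 - 4*t)) := by
      exact continuous_const.add (Real.continuous_sqrt.comp (by continuity))
    have hc2 : ContinuousAt Real.log (1 + Real.sqrt (1 - 4*(4⁻¹:ℝ))) := by
      apply Real.continuousAt_log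
      have : (1 - 4*(4⁻¹:ℝ)) = 0 := by norm_num
      rw [this, Real.sqrt_zero]; norm_num
    have h5 : ContinuousAt (fun t : ℝ => Real.log (1 + Real.sqrt (1-4*t))) 4⁻¹ :=
      ContinuousAt.comp (x := (4⁻¹:ℝ)) (g := Real.log)
        (f := fun t : ℝ => 1 + Real.sqrt (1-4*t)) hc2 hc1.continuousAt
    have h3 : Filter.Tendsto (fun k => Real.log (1 + Real.sqrt (1 - 4 * tk k)))
        Filter.atTop (nhds (Real.log (1 + Real.sqrt (1 - 4*(4⁻¹:ℝ))))) := by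
      have := h5.tendsto.comp htklim
      simpa [Function.comp_def] using this
    have h4 : Real.log (1 + Real.sqrt (1 - 4*(4⁻¹:ℝ))) = 0 := by
      have : (1 - 4*(4⁻¹:ℝ)) = 0 := by norm_num
      rw [this, Real.sqrt_zero]; norm_num
    rw [h4] at h3
    have := (tendsto_const_nhds (x := 2 * Real.log 2)).sub (h3.const_mul 2)
    simpa using this
  have hL2 : 2 * Real.log 2 ≤ ∑' m, b m := by
    refine le_of_tendsto hglim (Filter.Eventually.of_forall fun k => ?_)
    apply hasSum_le (fun m => ?_) (logSeries_interior (htk0 k) (htk4 k)) hsummable.hasSum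
    exact mul_le_mul_of_nonneg_left
      (pow_le_pow_left₀ (htk0 k) (htk4 k).le _) (aCoef_nonneg _)
  have : ∑' m, b m = 2 * Real.log 2 := le_antisymm hL1 hL2
  rw [← this]
  exact hsummable.hasSum

lemma logSeries_hasSum {t : ℝ} (ht0 : 0 ≤ t) (ht : t ≤ 4⁻¹) :
    HasSum (fun m : ℕ => aCoef (m+1) * t ^ (m+1))
      (2 * Real.log 2 - 2 * Real.log (1 + Real.sqrt (1 - 4*t))) := by
  rcases lt_or_eq_of_le ht with h | h
  · exact logSeries_interior ht0 h
  · subst h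
    have : (1 - 4*(4⁻¹:ℝ)) = 0 := by norm_num
    rw [this, Real.sqrt_zero]
    simpa using logSeries_boundary

/-- With `f_n(y) = Σ_{j=0}^n (1/n) C(n,j) C(2j,j) y^j` and `F(x,y) = Σ_{n≥1} f_n(y) x^n`,
for `0 < x < 1`, `y ≥ 0` with `4xy/(1-x) ≤ 1`:
`F(x,y) = ln 4 - 2 ln(√(1-x) + √(1-x-4xy))`. -/
theorem generating_function_closed_form (x y : ℝ) (hx0 : 0 < x) (hx1 : x < 1)
    (hy : 0 ≤ y) (hxy : 4 * x * y / (1 - x) ≤ 1) :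
    HasSum (fun n : ℕ =>
      (∑ j ∈ Finset.range (n + 2),
        (1 / (n + 1 : ℝ)) * ((n + 1).choose j : ℝ) * ((2 * j).choose j : ℝ) * y ^ j) *
        x ^ (n + 1))
      (Real.log 4 - 2 * Real.log (Real.sqrt (1 - x) + Real.sqrt (1 - x - 4 * x * y))) := by
  have hA : 0 < 1 - x := by linarith
  set t : ℝ := x * y / (1 - x) with htdef
  have ht0 : 0 ≤ t := by positivity
  have h4t : 4 * t ≤ 1 := by
    calc 4 * t = 4 * x * y / (1 - x) := by rw [htdef]; ring
      _ ≤ 1 := hxy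
  have ht4 : t ≤ 4⁻¹ := by linarith
  have hB : 0 ≤ 1 - x - 4 * x * y := by
    have := (div_le_one hA).mp hxy
    linarith
  set T : ℝ := Real.log 4 - 2 * Real.log (Real.sqrt (1 - x) + Real.sqrt (1 - x - 4 * x * y))
    with hT
  -- the double-sum function
  set F : ℕ × ℕ → ℝ := fun p => if p.1 ≤ p.2 + 1 then
      (1 / ((p.2:ℝ) + 1)) * (((p.2 + 1).choose p.1 : ℕ) : ℝ) * (((2 * p.1).choose p.1 : ℕ) : ℝ)
        * y ^ p.1 * x ^ (p.2 + 1) else 0 with hF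
  have hFnn : ∀ p : ℕ × ℕ, 0 ≤ F p := by
    intro p
    rw [hF]
    dsimp only
    split
    · positivity
    · exact le_refl 0
  -- column sums
  set col : ℕ → ℝ := fun j => if j = 0 then -Real.log (1 - x) else aCoef j * t ^ j with hcoldef
  have hxabs : |x| < 1 := by rw [abs_of_pos hx0]; exact hx1
  have hcol : ∀ j, HasSum (fun n => F (j, n)) (col j) := by
    intro j
    cases j with
    | zero =>
      have H := Real.hasSum_pow_div_log_of_abs_lt_one hxabs
      have : (fun n : ℕ => F (0, n)) = fun n : ℕ => x ^ (n+1) / ((n:ℝ)+1) := by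
        funext n
        rw [hF]
        simp only [Nat.zero_le, if_pos, Nat.choose_zero_right, Nat.choose_self]
        push_cast
        ring
      rw [hcoldef, this]
      simpa using H
    | succ m =>
      have base := hasSum_choose_mul_geometric_of_norm_lt_one (𝕜 := ℝ) m
        (r := x) (by rwa [Real.norm_eq_abs])
      set K : ℝ := (((2*(m+1)).choose (m+1) : ℕ) : ℝ) * y ^ (m+1) * x ^ (m+1) / ((m:ℝ)+1)
        with hK
      have base2 := base.mul_left K
      have hinj : Function.Injective (fun i : ℕ => i + m) := fun a b h => by simpa using h
      have hvanish : ∀ n ∉ Set.range (fun i : ℕ => i + m), F (m+1, n) = 0 := by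
        intro n hn
        have hnm : n < m := by
          by_contra h
          exact hn ⟨n - m, by show n - m + m = n; omega⟩
        rw [hF]
        exact if_neg (by omega)
      apply (Function.Injective.hasSum_iff hinj hvanish).mp
      have hfun : ((fun n => F (m+1, n)) ∘ (fun i : ℕ => i + m))
          = fun i : ℕ => K * ((((i+m).choose m : ℕ) : ℝ) * x ^ i) := by
        funext i
        simp only [Function.comp, hF]
        rw [if_pos (by omega)]
        have hcast : ((i:ℝ)+m+1) * (((i+m).choose m : ℕ) : ℝ)
            = (((i+m+1).choose (m+1) : ℕ) : ℝ) * ((m:ℝ)+1) := by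
          have := Nat.add_one_mul_choose_eq (i+m) m
          have h2 := congrArg (fun n : ℕ => (n : ℝ)) this
          push_cast at h2
          push_cast
          linarith [h2]
        have hne1 : ((i:ℝ)+m+1) ≠ 0 := by positivity
        have hne2 : ((m:ℝ)+1) ≠ 0 := by positivity
        rw [hK]
        have hpow : x ^ (i+m+1) = x ^ (m+1) * x ^ i := by
          rw [← pow_add]; ring_nf
        push_cast
        rw [hpow]
        field_simp
        linear_combination (-(((2*(m+1)).choose (m+1) : ℕ) : ℝ) * y^(m+1)) * hcast
      rw [hfun]
      convert base2 using 1
      · rfl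
      · simp only [hcoldef, Nat.succ_ne_zero, if_false, aCoef, hK]
        rw [htdef, div_pow, mul_pow]
        have : ((1:ℝ) - x) ^ (m+1) ≠ 0 := by positivity
        push_cast
        field_simp
  -- sum of columns
  have hV : HasSum (fun m : ℕ => col (m+1))
      (2 * Real.log 2 - 2 * Real.log (1 + Real.sqrt (1 - 4*t))) := by
    have := logSeries_hasSum ht0 ht4
    convert this using 2 with m
    simp [hcoldef]
  have hcolHasSum : HasSum col T := by
    have h2 := (hasSum_nat_add_iff (f := col) 1).mp hV
    have hval : (2 * Real.log 2 - 2 * Real.log (1 + Real.sqrt (1 - 4*t)))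
        + ∑ i ∈ Finset.range 1, col i = T := by
      rw [Finset.sum_range_one]
      simp only [hcoldef, if_pos, reduceIte]
      have hsA : 0 < Real.sqrt (1-x) := Real.sqrt_pos.mpr hA
      have hsB : 0 ≤ Real.sqrt (1-x-4*x*y) := Real.sqrt_nonneg _
      have h1 : 1 - 4*t = (1-x-4*x*y)/(1-x) := by
        rw [htdef]; field_simp
      have h2' : Real.sqrt ((1-x-4*x*y)/(1-x))
          = Real.sqrt (1-x-4*x*y) / Real.sqrt (1-x) := Real.sqrt_div hB _
      have h3 : 1 + Real.sqrt (1-x-4*x*y) / Real.sqrt (1-x)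
          = (Real.sqrt (1-x) + Real.sqrt (1-x-4*x*y)) / Real.sqrt (1-x) := by
        field_simp
      have h4 : Real.log ((Real.sqrt (1-x) + Real.sqrt (1-x-4*x*y)) / Real.sqrt (1-x))
          = Real.log (Real.sqrt (1-x) + Real.sqrt (1-x-4*x*y)) - Real.log (Real.sqrt (1-x)) :=
        Real.log_div (by positivity) hsA.ne'
      have h5 : Real.log (Real.sqrt (1-x)) = Real.log (1-x) / 2 := Real.log_sqrt hA.le
      have h6 : Real.log 4 = 2 * Real.log 2 := by
        rw [show (4:ℝ) = 2^2 by norm_num, Real.log_pow]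
        push_cast; ring
      rw [h1, h2', h3, h4, h5, hT, h6]
      push_cast
      ring
    rwa [hval] at h2
  -- summability of the double sum
  have hsumcols : ∀ j, Summable fun n => F (j, n) := fun j => (hcol j).summable
  have hcoleq : (fun j => ∑' n, F (j, n)) = col := funext fun j => (hcol j).tsum_eq
  have hsumF : Summable F := by
    apply (summable_prod_of_nonneg hFnn).mpr
    exact ⟨hsumcols, by rw [hcoleq]; exact hcolHasSum.summable⟩
  have htsumF : ∑' p, F p = T := by
    rw [Summable.tsum_prod' hsumF hsumcols]
    calc ∑' j, ∑' n, F (j, n) = ∑' j, col j := by rw [hcoleq]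
      _ = T := hcolHasSum.tsum_eq
  have hFT : HasSum F T := htsumF ▸ hsumF.hasSum
  -- swap coordinates
  have hswap : HasSum (fun p : ℕ × ℕ => F (p.2, p.1)) T := by
    have := (Equiv.prodComm ℕ ℕ).hasSum_iff (f := F) (a := T)
    apply this.mpr hFT
  -- rows
  apply hswap.prod_fiberwise
  intro n
  have hvan : ∀ j ∉ Finset.range (n+2), F (j, n) = 0 := by
    intro j hj
    simp only [hF]
    apply if_neg
    simp only [Finset.mem_range] at hj
    omega
  have := hasSum_sum_of_ne_finset_zero (f := fun j => F (j, n)) (s := Finset.range (n+2)) (L := SummationFilter.unconditional ℕ) hvan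
  convert this using 1
  rw [Finset.sum_mul]
  apply Finset.sum_congr rfl
  intro j hj
  simp only [Finset.mem_range] at hj
  simp only [hF]
  rw [if_pos (by omega)]
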